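/- If the n-sphere S^n is an absolute extensor for a metric space X, then X is (n+1)-inessential: for every sequence (A_i, B_i)_{i<n+1} of disjoint pairs of closed sets in X there exist disjoint open sets U_i ⊇ A_i, V_i ⊇ B_i (i < n+1) such that the family (U_i ∪ V_i)_{i<n+1} covers X. -/

import Mathlib

open Set

/-- If the `n`-sphere is an absolute extensor for a metric space `X`, then `X` is
`(n+1)`-inessential. -/
theorem stmt_7 {X : Type*} [MetricSpace X] (n : ℕ)
    (hAE : ∀ P : Set X, IsClosed P →
      ∀ f : X → Metric.sphere (0 : EuclideanSpace ℝ (Fin (n + 1))) 1,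
        ContinuousOn f P →
          ∃ g : X → Metric.sphere (0 : EuclideanSpace ℝ (Fin (n + 1))) 1,
            Continuous g ∧ Set.EqOn g f P)
    (A B : Fin (n + 1) → Set X)
    (hA : ∀ i, IsClosed (A i)) (hB : ∀ i, IsClosed (B i))
    (hAB : ∀ i, Disjoint (A i) (B i)) :
    ∃ U V : Fin (n + 1) → Set X,
      (∀ i, IsOpen (U i)) ∧ (∀ i, IsOpen (V i)) ∧
      (∀ i, A i ⊆ U i) ∧ (∀ i, B i ⊆ V i) ∧
      (∀ i, Disjoint (U i) (V i)) ∧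
      (⋃ i, U i ∪ V i) = Set.univ := by
  -- Urysohn functions
  choose f hf0 hf1 hf01 using fun i =>
    exists_continuous_zero_one_of_isClosed (hA i) (hB i) (hAB i)
  -- the map into the cube [-1/2, 1/2]^(n+1)
  set F : X → EuclideanSpace ℝ (Fin (n + 1)) := fun x => WithLp.toLp 2 (fun i => f i x - 1/2) with hFdef
  have hFcont : Continuous F := by
    refine (PiLp.continuous_toLp 2 _).comp (continuous_pi fun i => ?_)
    exact (f i).continuous.sub continuous_const
  -- the closed set P = F⁻¹(∂ cube)
  set P : Set X := ⋃ i, ((f i) ⁻¹' {0} ∪ (f i) ⁻¹' {1}) with hPdef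
  have hPclosed : IsClosed P := by
    apply isClosed_iUnion_of_finite
    intro i
    exact ((isClosed_singleton.preimage (f i).continuous).union
      (isClosed_singleton.preimage (f i).continuous))
  have hFne : ∀ x ∈ P, F x ≠ 0 := by
    intro x hx h0
    rcases mem_iUnion.1 hx with ⟨i, hi⟩
    have : F x i = 0 := by rw [h0]; rfl
    rcases hi with hi | hi
    · simp only [mem_preimage, mem_singleton_iff] at hi
      rw [show F x i = f i x - 1/2 from rfl, hi] at this
      norm_num at this
    · simp only [mem_preimage, mem_singleton_iff] at hi
      rw [show F x i = f i x - 1/2 from rfl, hi] at this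
      norm_num at this
  have hAP : ∀ i, A i ⊆ P := fun i x hx =>
    mem_iUnion.2 ⟨i, Or.inl (by simp [hf0 i hx])⟩
  have hBP : ∀ i, B i ⊆ P := fun i x hx =>
    mem_iUnion.2 ⟨i, Or.inr (by simp [hf1 i hx])⟩
  classical
  -- a total map into the sphere agreeing with the radial projection of F on P
  set e : EuclideanSpace ℝ (Fin (n + 1)) := EuclideanSpace.single 0 1 with hedef
  set v : X → EuclideanSpace ℝ (Fin (n + 1)) :=
    fun x => if F x = 0 then e else (‖F x‖)⁻¹ • F x with hvdef
  have hv : ∀ x, ‖v x‖ = 1 := by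
    intro x
    by_cases h : F x = 0
    · simp [hvdef, h, hedef, EuclideanSpace.norm_single]
    · have hn : ‖F x‖ ≠ 0 := norm_ne_zero_iff.2 h
      simp [hvdef, h, norm_smul, abs_of_nonneg (inv_nonneg.2 (norm_nonneg _)),
        inv_mul_cancel₀ hn]
  have hvmem : ∀ x, v x ∈ Metric.sphere (0 : EuclideanSpace ℝ (Fin (n + 1))) 1 := by
    intro x; simpa [mem_sphere_iff_norm] using hv x
  set φ : X → Metric.sphere (0 : EuclideanSpace ℝ (Fin (n + 1))) 1 :=
    fun x => ⟨v x, hvmem x⟩ with hφdef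
  have hvcont : ContinuousOn v P := by
    have hw : ContinuousOn (fun x => (‖F x‖)⁻¹ • F x) P := by
      refine ContinuousOn.smul (f := fun x => (‖F x‖)⁻¹) ?_ hFcont.continuousOn
      exact ((hFcont.norm).continuousOn).inv₀ fun x hx =>
        norm_ne_zero_iff.2 (hFne x hx)
    exact hw.congr fun x hx => by simp [hvdef, hFne x hx]
  have hφcont : ContinuousOn φ P := by
    rw [Topology.IsInducing.subtypeVal.continuousOn_iff]
    exact hvcont
  obtain ⟨g, hgcont, hgeq⟩ := hAE P hPclosed φ hφcont
  -- the open sets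
  refine ⟨fun i => {x | (g x : EuclideanSpace ℝ (Fin (n + 1))) i < 0},
    fun i => {x | 0 < (g x : EuclideanSpace ℝ (Fin (n + 1))) i}, ?_, ?_, ?_, ?_, ?_, ?_⟩
  · intro i
    exact isOpen_lt ((PiLp.continuous_apply 2 _ i).comp (continuous_subtype_val.comp hgcont))
      continuous_const
  · intro i
    exact isOpen_lt continuous_const
      ((PiLp.continuous_apply 2 _ i).comp (continuous_subtype_val.comp hgcont))
  · intro i x hx
    have hxP : x ∈ P := hAP i hx
    have hne : F x ≠ 0 := hFne x hxP
    have : (g x : EuclideanSpace ℝ (Fin (n + 1))) = v x := by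
      rw [hgeq hxP]
    have hFi : F x i = -(1/2 : ℝ) := by
      show f i x - 1/2 = -(1/2)
      rw [hf0 i hx]; norm_num
    have hpos : 0 < ‖F x‖ := norm_pos_iff.2 hne
    simp only [mem_setOf_eq, this, hvdef, if_neg hne]
    show (‖F x‖)⁻¹ * F x i < 0
    rw [hFi]
    exact mul_neg_of_pos_of_neg (inv_pos.2 hpos) (by norm_num)
  · intro i x hx
    have hxP : x ∈ P := hBP i hx
    have hne : F x ≠ 0 := hFne x hxP
    have : (g x : EuclideanSpace ℝ (Fin (n + 1))) = v x := by
      rw [hgeq hxP]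
    have hFi : F x i = (1/2 : ℝ) := by
      show f i x - 1/2 = 1/2
      rw [hf1 i hx]; norm_num
    have hpos : 0 < ‖F x‖ := norm_pos_iff.2 hne
    simp only [mem_setOf_eq, this, hvdef, if_neg hne]
    show 0 < (‖F x‖)⁻¹ * F x i
    rw [hFi]
    exact mul_pos (inv_pos.2 hpos) (by norm_num)
  · intro i
    apply Set.disjoint_left.2
    intro x hx hx'
    simp only [mem_setOf_eq] at hx hx'
    linarith
  · ext x
    simp only [mem_iUnion, mem_union, mem_setOf_eq, mem_univ, iff_true]
    by_contra h
    push_neg at h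
    have hzero : (g x : EuclideanSpace ℝ (Fin (n + 1))) = 0 := by
      ext i
      exact le_antisymm (h i).2 (h i).1
    have := (g x).2
    rw [mem_sphere_iff_norm, hzero] at this
    simp at this
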